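/- (Proposition 2, dimension bound for the space of value-equivalent transition matrices.) Let S and A be finite nonempty types, and let P : Matrix (S × A) S ℝ. Let π₁, …, π_m be policies such that for every s ∈ S the m vectors (a ↦ π_i s a) in (A → ℝ) are linearly independent, and let v₁, …, v_k : S → ℝ be linearly independent. Then there exists a linear subspace W of Matrix (S × A) S ℝ with finrank ℝ W ≤ |S| * (|S| * |A| − m * k) such that every matrix P̃ : Matrix (S × A) S ℝ satisfying ∑_{a} π_i s a * ∑_{s'} (P̃ (s,a) s' − P (s,a) s') * v_j s' = 0 for all i ∈ {1,…,m}, j ∈ {1,…,k} and s ∈ S lies in the translate {P + w : w ∈ W}. (Note m ≤ |A| and k ≤ |S| follow from the independence hypotheses, so m * k ≤ |S| * |A|.) -/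

import Mathlib

open Finset

/-- Dual family for a linearly independent family in a finite function space. -/
lemma exists_dual_family {ι : Type} [Fintype ι] {n : ℕ} {b : Fin n → ι → ℝ}
    (hb : LinearIndependent ℝ b) :
    ∃ u : Fin n → ι → ℝ,
      ∀ i i' : Fin n, ∑ x, b i' x * u i x = if i = i' then 1 else 0 := by
  classical
  set B := Module.Basis.span hb with hB
  have key : ∀ i : Fin n, ∃ φ : (ι → ℝ) →ₗ[ℝ] ℝ,
      ∀ i', φ (b i') = if i = i' then 1 else 0 := by
    intro i
    obtain ⟨φ, hφ⟩ := (B.coord i).exists_extend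
    refine ⟨φ, fun i' => ?_⟩
    have h1 : b i' = ((B i' : Submodule.span ℝ (Set.range b)) : ι → ℝ) := by
      rw [hB, Module.Basis.span_apply]
    rw [h1]
    have := LinearMap.congr_fun hφ (B i')
    simp only [LinearMap.comp_apply, Submodule.subtype_apply] at this
    rw [this, Module.Basis.coord_apply, Module.Basis.repr_self, Finsupp.single_apply]
    simp [eq_comm]
  choose φ hφ using key
  refine ⟨fun i x => φ i (Pi.single x 1), fun i i' => ?_⟩
  calc ∑ x, b i' x * φ i (Pi.single x 1)
      = ∑ x, φ i (Pi.single x (b i' x)) := by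
        refine Finset.sum_congr rfl fun x _ => ?_
        rw [show (Pi.single x (b i' x) : ι → ℝ) = b i' x • (Pi.single x 1 : ι → ℝ) by
          ext y; simp [Pi.single_apply]]
        rw [map_smul, smul_eq_mul]
    _ = φ i (∑ x, Pi.single x (b i' x)) := (map_sum _ _ _).symm
    _ = φ i (b i') := by rw [Finset.univ_sum_single]
    _ = if i = i' then 1 else 0 := hφ i i'

/-- **Proposition 2**: dimension bound for the space of value-equivalent
transition matrices. -/
theorem dim_bound_valueEquiv_transition_matrices
    {S A : Type} [Fintype S] [Fintype A] [Nonempty S] [Nonempty A]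
    (P : Matrix (S × A) S ℝ)
    (m k : ℕ) (πs : Fin m → S → A → ℝ)
    (hπ_nonneg : ∀ i s a, 0 ≤ πs i s a)
    (hπ_sum : ∀ i s, ∑ a, πs i s a = 1)
    (hπ_indep : ∀ s : S, LinearIndependent ℝ (fun i : Fin m => (πs i s : A → ℝ)))
    (vs : Fin k → S → ℝ) (hv_indep : LinearIndependent ℝ vs) :
    ∃ W : Submodule ℝ (Matrix (S × A) S ℝ),
      Module.finrank ℝ W ≤
        Fintype.card S * (Fintype.card S * Fintype.card A - m * k) ∧
      ∀ Pt : Matrix (S × A) S ℝ,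
        (∀ (i : Fin m) (j : Fin k) (s : S),
          ∑ a, πs i s a * ∑ s', (Pt (s, a) s' - P (s, a) s') * vs j s' = 0) →
        ∃ w ∈ W, Pt = P + w := by
  obtain ⟨w, hw⟩ := exists_dual_family hv_indep
  have hus : ∀ s : S, ∃ u : Fin m → A → ℝ,
      ∀ i i', ∑ a, πs i' s a * u i a = if i = i' then 1 else 0 :=
    fun s => exists_dual_family (hπ_indep s)
  choose u hu using hus
  let L : Matrix (S × A) S ℝ →ₗ[ℝ] (Fin m × Fin k × S → ℝ) :=
    { toFun := fun Q p => ∑ a, πs p.1 p.2.2 a * ∑ s', Q (p.2.2, a) s' * vs p.2.1 s'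
      map_add' := by
        intro Q R
        funext p
        simp [add_mul, mul_add, Finset.sum_add_distrib]
      map_smul' := by
        intro c Q
        funext p
        simp only [RingHom.id_apply, Pi.smul_apply, Matrix.smul_apply, smul_eq_mul,
          Finset.mul_sum]
        refine Finset.sum_congr rfl fun a _ => ?_
        refine Finset.sum_congr rfl fun s' _ => ?_
        ring }
  have hLsurj : Function.Surjective L := by
    intro c
    refine ⟨fun p s' => ∑ i, ∑ j, c (i, j, p.1) * u p.1 i p.2 * w j s', ?_⟩
    funext p
    obtain ⟨i', j', s⟩ := p
    show (∑ a, πs i' s a * ∑ s', (∑ i, ∑ j, c (i, j, s) * u s i a * w j s') * vs j' s')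
        = c (i', j', s)
    have h1 : ∀ a, (∑ s', (∑ i, ∑ j, c (i, j, s) * u s i a * w j s') * vs j' s')
        = ∑ i, ∑ j, (c (i, j, s) * u s i a) * (∑ s', vs j' s' * w j s') := by
      intro a
      simp_rw [Finset.sum_mul, Finset.mul_sum]
      conv_lhs => rw [Finset.sum_comm]
      refine Finset.sum_congr rfl fun i _ => ?_
      conv_lhs => rw [Finset.sum_comm]
      refine Finset.sum_congr rfl fun j _ => ?_
      refine Finset.sum_congr rfl fun s' _ => ?_
      ring
    simp_rw [h1, hw]
    simp only [mul_ite, mul_one, mul_zero, Finset.sum_ite_eq, Finset.sum_ite_eq', Finset.mem_univ, if_true]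
    have h2 : ∀ a, πs i' s a * (∑ i, c (i, j', s) * u s i a)
        = ∑ i, c (i, j', s) * (πs i' s a * u s i a) := by
      intro a
      rw [Finset.mul_sum]
      refine Finset.sum_congr rfl fun i _ => ?_
      ring
    simp_rw [h2]
    rw [Finset.sum_comm]
    have h3 : ∀ i, ∑ a, c (i, j', s) * (πs i' s a * u s i a)
        = c (i, j', s) * ∑ a, πs i' s a * u s i a := by
      intro i
      rw [Finset.mul_sum]
    simp_rw [h3, hu]
    simp [eq_comm]
  refine ⟨LinearMap.ker L, ?_, ?_⟩
  · have h1 := LinearMap.finrank_range_add_finrank_ker L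
    have h2 : Module.finrank ℝ (LinearMap.range L)
        = Module.finrank ℝ (Fin m × Fin k × S → ℝ) := by
      rw [LinearMap.range_eq_top.mpr hLsurj]
      exact finrank_top ℝ _
    have h3 : Module.finrank ℝ (Fin m × Fin k × S → ℝ) = m * k * Fintype.card S := by
      simp [Module.finrank_pi, mul_assoc]
    have h4 : Module.finrank ℝ (Matrix (S × A) S ℝ)
        = Fintype.card S * Fintype.card A * Fintype.card S := by
      simp [Module.finrank_matrix]
    have hker : Module.finrank ℝ (LinearMap.ker L)
        = Fintype.card S * Fintype.card A * Fintype.card S - m * k * Fintype.card S := by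
      omega
    rw [hker, Nat.mul_sub]
    have e1 : Fintype.card S * (Fintype.card S * Fintype.card A)
        = Fintype.card S * Fintype.card A * Fintype.card S := by ring
    have e2 : Fintype.card S * (m * k) = m * k * Fintype.card S := by ring
    omega
  · intro Pt hPt
    refine ⟨Pt - P, ?_, by abel⟩
    rw [LinearMap.mem_ker]
    funext p
    obtain ⟨i, j, s⟩ := p
    exact hPt i j s
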